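/- Let F = K_3 ∪ D_3, where D_3 consists of two vertex-disjoint triangles joined by a single edge. For n ≥ 15 with n ≡ 0 (mod 3), the graph D_3 ∪ ((n-6)/3)·P_3 (disjoint union of D_3 with (n-6)/3 paths on 3 vertices) is weakly (K_n, F)-saturated; hence wsat(K_n, F) ≤ 2n/3 + 3. -/

import Mathlib

open SimpleGraph Finset Filter

/-- `F` has a copy (an injective graph homomorphism image) in `G`. -/
def HasCopy {W V : Type*} (F : SimpleGraph W) (G : SimpleGraph V) : Prop :=
  ∃ f : W ↪ V, ∀ a b, F.Adj a b → G.Adj (f a) (f b)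

/-- Adding the edge `xy` to `H` creates a new copy of `F` containing `xy`. -/
def NewCopyStep {W V : Type*} (F : SimpleGraph W) (H : SimpleGraph V) (x y : V) : Prop :=
  ¬ H.Adj x y ∧
  ∃ f : W ↪ V, ∃ a b : W, F.Adj a b ∧ f a = x ∧ f b = y ∧
    ∀ c d, F.Adj c d → (H ⊔ SimpleGraph.fromEdgeSet {s(x, y)}).Adj (f c) (f d)

/-- The list `l` of edges can be added successively to `H`, each addition creating a
new copy of `F` containing the added edge. -/
def SatProcess {W V : Type*} (F : SimpleGraph W) : SimpleGraph V → List (V × V) → Prop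
  | _, [] => True
  | H, e :: l => NewCopyStep F H e.1 e.2 ∧
      SatProcess F (H ⊔ SimpleGraph.fromEdgeSet {s(e.1, e.2)}) l

/-- The graph obtained from `H` by adding all edges in the list `l`. -/
def addEdges {V : Type*} (H : SimpleGraph V) (l : List (V × V)) : SimpleGraph V :=
  H ⊔ SimpleGraph.fromEdgeSet {e | ∃ p ∈ l, e = s(p.1, p.2)}

/-- `H` is weakly `(G, F)`-saturated. -/
def WeaklySaturated {W V : Type*} (G : SimpleGraph V) (F : SimpleGraph W)
    (H : SimpleGraph V) : Prop :=
  H ≤ G ∧ ¬ HasCopy F H ∧ ∃ l : List (V × V), SatProcess F H l ∧ addEdges H l = G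

/-- The weak saturation number `wsat(G, F)`. -/
noncomputable def wsat {W V : Type*} (G : SimpleGraph V) (F : SimpleGraph W) : ℕ :=
  sInf {m | ∃ H, WeaklySaturated G F H ∧ H.edgeSet.ncard = m}

/-- `F = K_3 ∪ D_3` on 9 vertices: a triangle on `{0,1,2}`, and `D_3` on `{3,…,8}`
(triangles `{3,4,5}` and `{6,7,8}` joined by the edge `56`). -/
def K3UnionD3 : SimpleGraph (Fin 9) :=
  SimpleGraph.fromRel (fun x y => ((x : ℕ), (y : ℕ)) ∈
    [(0,1), (0,2), (1,2), (3,4), (3,5), (4,5), (5,6), (6,7), (6,8), (7,8)])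

/-- The graph `D_3 ∪ ((n-6)/3)·P_3` on `Fin n`: a copy of `D_3` on the vertices
`{0,…,5}` (triangles `{0,1,2}` and `{3,4,5}` joined by the edge `23`), and a path
on the three vertices `{3i+6, 3i+7, 3i+8}` for each `i`. -/
def D3UnionPaths (n : ℕ) : SimpleGraph (Fin n) :=
  SimpleGraph.fromRel (fun x y =>
    (((x : ℕ), (y : ℕ)) ∈ [(0,1), (0,2), (1,2), (3,4), (3,5), (4,5), (2,3)]) ∨
    (6 ≤ (x : ℕ) ∧ 6 ≤ (y : ℕ) ∧ (x : ℕ) / 3 = (y : ℕ) / 3 ∧ (x : ℕ) + 1 = (y : ℕ)))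

lemma addEdges_nil {V : Type*} (H : SimpleGraph V) : addEdges H [] = H := by
  ext x y; simp [addEdges]

lemma addEdges_cons {V : Type*} (H : SimpleGraph V) (e : V × V) (l : List (V × V)) :
    addEdges H (e :: l) = addEdges (H ⊔ SimpleGraph.fromEdgeSet {s(e.1, e.2)}) l := by
  ext x y; simp [addEdges, SimpleGraph.fromEdgeSet_adj]; aesop

lemma addEdges_adj {V : Type*} (H : SimpleGraph V) (l : List (V × V)) (x y : V) :
    (addEdges H l).Adj x y ↔ H.Adj x y ∨ (x ≠ y ∧ ∃ q ∈ l, s(x, y) = s(q.1, q.2)) := by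
  simp [addEdges, SimpleGraph.fromEdgeSet_adj]; aesop

lemma le_addEdges {V : Type*} (H : SimpleGraph V) (l : List (V × V)) : H ≤ addEdges H l :=
  le_sup_left

lemma satProcess_append {W V : Type*} (F : SimpleGraph W) (H : SimpleGraph V)
    (l1 l2 : List (V × V)) (h1 : SatProcess F H l1)
    (h2 : SatProcess F (addEdges H l1) l2) : SatProcess F H (l1 ++ l2) := by
  induction l1 generalizing H with
  | nil => rw [addEdges_nil] at h2; simpa using h2
  | cons e t ih =>
      rw [addEdges_cons] at h2
      exact ⟨h1.1, ih _ h1.2 h2⟩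

lemma satProcess_of_steps {W V : Type*} (F : SimpleGraph W) (H : SimpleGraph V)
    (l : List (V × V))
    (h : ∀ p e s, l = p ++ e :: s → NewCopyStep F (addEdges H p) e.1 e.2) :
    SatProcess F H l := by
  suffices h' : ∀ l2 l1, l = l1 ++ l2 → SatProcess F (addEdges H l1) l2 by
    have := h' l [] rfl
    rwa [addEdges_nil] at this
  intro l2
  induction l2 with
  | nil => intro _ _; trivial
  | cons e t ih =>
      intro l1 hl
      refine ⟨h l1 e t hl, ?_⟩
      have h2 := ih (l1 ++ [e]) (by simp [hl])
      rwa [show addEdges H (l1 ++ [e]) = addEdges H l1 ⊔ SimpleGraph.fromEdgeSet {s(e.1, e.2)} from ?_] at h2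
      ext x y
      simp [addEdges, SimpleGraph.fromEdgeSet_adj]
      aesop

lemma base_adj {n : ℕ} (x y : Fin n) :
    (D3UnionPaths n).Adj x y ↔ (x : ℕ) ≠ (y : ℕ) ∧
      (((x : ℕ)/3 = (y : ℕ)/3 ∧ ((x : ℕ) < 6 ∨ (x : ℕ)+1 = (y : ℕ) ∨ (y : ℕ)+1 = (x : ℕ))) ∨
       ((x : ℕ) = 2 ∧ (y : ℕ) = 3) ∨ ((x : ℕ) = 3 ∧ (y : ℕ) = 2)) := by
  unfold D3UnionPaths
  rw [SimpleGraph.fromRel_adj]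
  simp only [List.mem_cons, List.not_mem_nil, or_false, Prod.mk.injEq, ne_eq, Fin.ext_iff]
  constructor
  · rintro ⟨hne, h | h⟩ <;> refine ⟨hne, ?_⟩
    · rcases h with (h|h|h|h|h|h|h)|h <;> omega
    · rcases h with (h|h|h|h|h|h|h)|h <;> omega
  · rintro ⟨hne, h | h | h⟩
    · refine ⟨hne, ?_⟩
      rcases h with ⟨h1, h2 | h2 | h2⟩
      · by_cases hxy : (x:ℕ) < (y:ℕ)
        · left; left; omega
        · right; left; omega
      · by_cases h6 : (x:ℕ) < 6
        · left; left; omega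
        · left; right; omega
      · by_cases h6 : (y:ℕ) < 6
        · right; left; omega
        · right; right; omega
    · exact ⟨hne, Or.inl (Or.inl (by omega))⟩
    · exact ⟨hne, Or.inr (Or.inl (by omega))⟩

lemma F_adj (c d : Fin 9) :
    K3UnionD3.Adj c d ↔ c ≠ d ∧
      (((c:ℕ),(d:ℕ)) ∈ [(0,1), (0,2), (1,2), (3,4), (3,5), (4,5), (5,6), (6,7), (6,8), (7,8)] ∨
       ((d:ℕ),(c:ℕ)) ∈ [(0,1), (0,2), (1,2), (3,4), (3,5), (4,5), (5,6), (6,7), (6,8), (7,8)]) := by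
  rw [K3UnionD3, SimpleGraph.fromRel_adj]

lemma copyAdj {n : ℕ} (G : SimpleGraph (Fin n)) (f : Fin 9 → Fin n)
    (h01 : G.Adj (f 0) (f 1)) (h02 : G.Adj (f 0) (f 2)) (h12 : G.Adj (f 1) (f 2))
    (h34 : G.Adj (f 3) (f 4)) (h35 : G.Adj (f 3) (f 5)) (h45 : G.Adj (f 4) (f 5))
    (h56 : G.Adj (f 5) (f 6)) (h67 : G.Adj (f 6) (f 7)) (h68 : G.Adj (f 6) (f 8))
    (h78 : G.Adj (f 7) (f 8)) :
    ∀ c d, K3UnionD3.Adj c d → G.Adj (f c) (f d) := by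
  intro c d hcd
  fin_cases c <;> fin_cases d <;>
    first
      | exact h01 | exact h01.symm | exact h02 | exact h02.symm
      | exact h12 | exact h12.symm | exact h34 | exact h34.symm
      | exact h35 | exact h35.symm | exact h45 | exact h45.symm
      | exact h56 | exact h56.symm | exact h67 | exact h67.symm
      | exact h68 | exact h68.symm | exact h78 | exact h78.symm
      | exact absurd ((F_adj _ _).mp hcd) (by decide)

/-- values for the phase-2 embedding -/
def emb9 (m a ar b br : ℕ) : Fin 9 → ℕ
  | ⟨0,_⟩ => 3*m
  | ⟨1,_⟩ => 3*m+1
  | ⟨2,_⟩ => 3*m+2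
  | ⟨3,_⟩ => 3*a+(ar+1)%3
  | ⟨4,_⟩ => 3*a+(ar+2)%3
  | ⟨5,_⟩ => 3*a+ar
  | ⟨6,_⟩ => 3*b+br
  | ⟨7,_⟩ => 3*b+(br+1)%3
  | ⟨8,_⟩ => 3*b+(br+2)%3

/-- values for the phase-1 embedding -/
def emb9' (i : ℕ) : Fin 9 → ℕ
  | ⟨0,_⟩ => 6+3*i
  | ⟨1,_⟩ => 7+3*i
  | ⟨2,_⟩ => 8+3*i
  | ⟨3,_⟩ => 0
  | ⟨4,_⟩ => 1
  | ⟨5,_⟩ => 2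
  | ⟨6,_⟩ => 3
  | ⟨7,_⟩ => 4
  | ⟨8,_⟩ => 5


section
variable {m a ar b br i : ℕ}
@[local simp] lemma emb9_0 : emb9 m a ar b br 0 = 3*m := rfl
@[local simp] lemma emb9_1 : emb9 m a ar b br 1 = 3*m+1 := rfl
@[local simp] lemma emb9_2 : emb9 m a ar b br 2 = 3*m+2 := rfl
@[local simp] lemma emb9_3 : emb9 m a ar b br 3 = 3*a+(ar+1)%3 := rfl
@[local simp] lemma emb9_4 : emb9 m a ar b br 4 = 3*a+(ar+2)%3 := rfl
@[local simp] lemma emb9_5 : emb9 m a ar b br 5 = 3*a+ar := rfl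
@[local simp] lemma emb9_6 : emb9 m a ar b br 6 = 3*b+br := rfl
@[local simp] lemma emb9_7 : emb9 m a ar b br 7 = 3*b+(br+1)%3 := rfl
@[local simp] lemma emb9_8 : emb9 m a ar b br 8 = 3*b+(br+2)%3 := rfl
@[local simp] lemma emb9'_0 : emb9' i 0 = 6+3*i := rfl
@[local simp] lemma emb9'_1 : emb9' i 1 = 7+3*i := rfl
@[local simp] lemma emb9'_2 : emb9' i 2 = 8+3*i := rfl
@[local simp] lemma emb9'_3 : emb9' i 3 = 0 := rfl
@[local simp] lemma emb9'_4 : emb9' i 4 = 1 := rfl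
@[local simp] lemma emb9'_5 : emb9' i 5 = 2 := rfl
@[local simp] lemma emb9'_6 : emb9' i 6 = 3 := rfl
@[local simp] lemma emb9'_7 : emb9' i 7 = 4 := rfl
@[local simp] lemma emb9'_8 : emb9' i 8 = 5 := rfl

@[local simp] lemma emb9_mk0 (h : (0:ℕ) < 9) : emb9 m a ar b br ⟨0,h⟩ = 3*m := rfl
@[local simp] lemma emb9_mk1 (h : (1:ℕ) < 9) : emb9 m a ar b br ⟨1,h⟩ = 3*m+1 := rfl
@[local simp] lemma emb9_mk2 (h : (2:ℕ) < 9) : emb9 m a ar b br ⟨2,h⟩ = 3*m+2 := rfl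
@[local simp] lemma emb9_mk3 (h : (3:ℕ) < 9) : emb9 m a ar b br ⟨3,h⟩ = 3*a+(ar+1)%3 := rfl
@[local simp] lemma emb9_mk4 (h : (4:ℕ) < 9) : emb9 m a ar b br ⟨4,h⟩ = 3*a+(ar+2)%3 := rfl
@[local simp] lemma emb9_mk5 (h : (5:ℕ) < 9) : emb9 m a ar b br ⟨5,h⟩ = 3*a+ar := rfl
@[local simp] lemma emb9_mk6 (h : (6:ℕ) < 9) : emb9 m a ar b br ⟨6,h⟩ = 3*b+br := rfl
@[local simp] lemma emb9_mk7 (h : (7:ℕ) < 9) : emb9 m a ar b br ⟨7,h⟩ = 3*b+(br+1)%3 := rfl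
@[local simp] lemma emb9_mk8 (h : (8:ℕ) < 9) : emb9 m a ar b br ⟨8,h⟩ = 3*b+(br+2)%3 := rfl
@[local simp] lemma emb9'_mk0 (h : (0:ℕ) < 9) : emb9' i ⟨0,h⟩ = 6+3*i := rfl
@[local simp] lemma emb9'_mk1 (h : (1:ℕ) < 9) : emb9' i ⟨1,h⟩ = 7+3*i := rfl
@[local simp] lemma emb9'_mk2 (h : (2:ℕ) < 9) : emb9' i ⟨2,h⟩ = 8+3*i := rfl
@[local simp] lemma emb9'_mk3 (h : (3:ℕ) < 9) : emb9' i ⟨3,h⟩ = 0 := rfl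
@[local simp] lemma emb9'_mk4 (h : (4:ℕ) < 9) : emb9' i ⟨4,h⟩ = 1 := rfl
@[local simp] lemma emb9'_mk5 (h : (5:ℕ) < 9) : emb9' i ⟨5,h⟩ = 2 := rfl
@[local simp] lemma emb9'_mk6 (h : (6:ℕ) < 9) : emb9' i ⟨6,h⟩ = 3 := rfl
@[local simp] lemma emb9'_mk7 (h : (7:ℕ) < 9) : emb9' i ⟨7,h⟩ = 4 := rfl
@[local simp] lemma emb9'_mk8 (h : (8:ℕ) < 9) : emb9' i ⟨8,h⟩ = 5 := rfl

lemma emb9_inj (har : ar < 3) (hbr : br < 3) (hma : m ≠ a) (hmb : m ≠ b)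
    (hab : a ≠ b) : Function.Injective (emb9 m a ar b br) := by
  intro i j hij
  fin_cases i <;> fin_cases j <;>
    first
      | rfl
      | (exfalso;
         simp only [emb9_0, emb9_1, emb9_2, emb9_3, emb9_4, emb9_5, emb9_6, emb9_7, emb9_8, emb9_mk0, emb9_mk1, emb9_mk2, emb9_mk3, emb9_mk4, emb9_mk5, emb9_mk6, emb9_mk7, emb9_mk8] at hij;
         omega)

lemma emb9'_inj (i : ℕ) : Function.Injective (emb9' i) := by
  intro p q hpq
  fin_cases p <;> fin_cases q <;>
    first
      | rfl
      | (exfalso;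
         simp only [emb9'_0, emb9'_1, emb9'_2, emb9'_3, emb9'_4, emb9'_5, emb9'_6, emb9'_7, emb9'_8, emb9'_mk0, emb9'_mk1, emb9'_mk2, emb9'_mk3, emb9'_mk4, emb9'_mk5, emb9'_mk6, emb9'_mk7, emb9'_mk8] at hpq;
         omega)

lemma step1 {n : ℕ} (hn : 15 ≤ n) (G : SimpleGraph (Fin n)) (i : ℕ) (hi : i < n/3 - 2)
    (x y : Fin n) (hx : (x:ℕ) = 6+3*i) (hy : (y:ℕ) = 8+3*i)
    (hG : ¬ G.Adj x y) (hbase : D3UnionPaths n ≤ G) :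
    NewCopyStep K3UnionD3 G x y := by
  have hxn : (x:ℕ) < n := x.isLt
  have hb : ∀ j : Fin 9, emb9' i j < n := by
    intro j; fin_cases j <;> simp <;> omega
  refine ⟨hG, ⟨fun j => ⟨emb9' i j, hb j⟩, fun p q hpq => emb9'_inj i (congrArg Fin.val hpq)⟩,
    0, 2, (F_adj 0 2).mpr (by decide), Fin.ext (by exact hx.symm), Fin.ext (by exact hy.symm), ?_⟩
  set f : Fin 9 ↪ Fin n :=
    ⟨fun j => ⟨emb9' i j, hb j⟩, fun p q hpq => emb9'_inj i (congrArg Fin.val hpq)⟩ with hf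
  have hv : ∀ j : Fin 9, ((f j : Fin n) : ℕ) = emb9' i j := fun j => rfl
  have hB : ∀ p q : Fin 9, (D3UnionPaths n).Adj (f p) (f q) →
      (G ⊔ SimpleGraph.fromEdgeSet {s(x, y)}).Adj (f p) (f q) :=
    fun p q h => (SimpleGraph.sup_adj _ _ _ _).mpr (Or.inl (hbase h))
  have hnew : (G ⊔ SimpleGraph.fromEdgeSet {s(x, y)}).Adj (f 0) (f 2) := by
    have h0 : f 0 = x := Fin.ext (by exact hx.symm)
    have h2 : f 2 = y := Fin.ext (by exact hy.symm)
    rw [h0, h2]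
    exact (SimpleGraph.sup_adj _ _ _ _).mpr (Or.inr ((SimpleGraph.fromEdgeSet_adj _).mpr
      ⟨rfl, Fin.ne_of_val_ne (by omega)⟩))
  refine copyAdj _ (fun j => f j) ?_ ?_ ?_ ?_ ?_ ?_ ?_ ?_ ?_ ?_ <;>
    first
      | exact hnew
      | (apply hB; rw [base_adj]; simp only [hv, emb9'_0, emb9'_1, emb9'_2, emb9'_3, emb9'_4,
          emb9'_5, emb9'_6, emb9'_7, emb9'_8, true_and, and_true, true_or, or_true]; omega)

lemma step2 {n : ℕ} (hn : 15 ≤ n) (h3 : n % 3 = 0) (G : SimpleGraph (Fin n))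
    (x y : Fin n) (hG : ¬ G.Adj x y)
    (htri : ∀ u v : Fin n, (u:ℕ) ≠ (v:ℕ) → (u:ℕ)/3 = (v:ℕ)/3 → G.Adj u v)
    (hne : (x:ℕ)/3 ≠ (y:ℕ)/3) :
    NewCopyStep K3UnionD3 G x y := by
  have hxn : (x:ℕ) < n := x.isLt
  have hyn : (y:ℕ) < n := y.isLt
  obtain ⟨m, hm3, hma, hmb⟩ : ∃ m, m < 3 ∧ m ≠ (x:ℕ)/3 ∧ m ≠ (y:ℕ)/3 := by
    rcases (show (x:ℕ)/3 ≠ 0 ∧ (y:ℕ)/3 ≠ 0 ∨ (x:ℕ)/3 ≠ 1 ∧ (y:ℕ)/3 ≠ 1 ∨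
        (x:ℕ)/3 ≠ 2 ∧ (y:ℕ)/3 ≠ 2 from by omega) with h|h|h
    · exact ⟨0, by omega, fun h' => h.1 h'.symm, fun h' => h.2 h'.symm⟩
    · exact ⟨1, by omega, fun h' => h.1 h'.symm, fun h' => h.2 h'.symm⟩
    · exact ⟨2, by omega, fun h' => h.1 h'.symm, fun h' => h.2 h'.symm⟩
  have hb : ∀ j : Fin 9, emb9 m ((x:ℕ)/3) ((x:ℕ)%3) ((y:ℕ)/3) ((y:ℕ)%3) j < n := by
    intro j; fin_cases j <;> simp <;> omega
  have hinj := emb9_inj (m := m) (ar := (x:ℕ)%3) (br := (y:ℕ)%3) (Nat.mod_lt _ (by omega)) (Nat.mod_lt _ (by omega)) hma hmb hne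
  refine ⟨hG, ⟨fun j => ⟨emb9 m ((x:ℕ)/3) ((x:ℕ)%3) ((y:ℕ)/3) ((y:ℕ)%3) j, hb j⟩,
      fun p q hpq => hinj (congrArg Fin.val hpq)⟩,
    5, 6, (F_adj 5 6).mpr (by decide), Fin.ext (by show 3*((x:ℕ)/3)+(x:ℕ)%3 = (x:ℕ); omega), Fin.ext (by show 3*((y:ℕ)/3)+(y:ℕ)%3 = (y:ℕ); omega), ?_⟩
  set f : Fin 9 ↪ Fin n :=
    ⟨fun j => ⟨emb9 m ((x:ℕ)/3) ((x:ℕ)%3) ((y:ℕ)/3) ((y:ℕ)%3) j, hb j⟩,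
      fun p q hpq => hinj (congrArg Fin.val hpq)⟩ with hf
  have hv : ∀ j : Fin 9, ((f j : Fin n) : ℕ) = emb9 m ((x:ℕ)/3) ((x:ℕ)%3) ((y:ℕ)/3) ((y:ℕ)%3) j :=
    fun j => rfl
  have hT : ∀ p q : Fin 9, ((f p : Fin n) : ℕ) ≠ ((f q : Fin n) : ℕ) →
      ((f p : Fin n) : ℕ)/3 = ((f q : Fin n) : ℕ)/3 →
      (G ⊔ SimpleGraph.fromEdgeSet {s(x, y)}).Adj (f p) (f q) :=
    fun p q h1 h2 => (SimpleGraph.sup_adj _ _ _ _).mpr (Or.inl (htri _ _ h1 h2))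
  have hnew : (G ⊔ SimpleGraph.fromEdgeSet {s(x, y)}).Adj (f 5) (f 6) := by
    have h5 : f 5 = x := Fin.ext (by rw [hv 5, emb9_5]; omega)
    have h6 : f 6 = y := Fin.ext (by rw [hv 6, emb9_6]; omega)
    rw [h5, h6]
    exact (SimpleGraph.sup_adj _ _ _ _).mpr (Or.inr ((SimpleGraph.fromEdgeSet_adj _).mpr
      ⟨rfl, Fin.ne_of_val_ne (by omega)⟩))
  refine copyAdj _ (fun j => f j) ?_ ?_ ?_ ?_ ?_ ?_ ?_ ?_ ?_ ?_ <;>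
    first
      | exact hnew
      | (apply hT <;> (simp only [hv, emb9_0, emb9_1, emb9_2, emb9_3, emb9_4, emb9_5, emb9_6,
          emb9_7, emb9_8, true_and, and_true, true_or, or_true]; omega))
end

lemma triangle_lt6 {n : ℕ} {x y z : Fin n} (hxy : (D3UnionPaths n).Adj x y)
    (hyz : (D3UnionPaths n).Adj y z) (hxz : (D3UnionPaths n).Adj x z) :
    (x:ℕ) < 6 ∧ (y:ℕ) < 6 ∧ (z:ℕ) < 6 := by
  rw [base_adj] at hxy hyz hxz
  omega

lemma noCopy {n : ℕ} (hn : 15 ≤ n) : ¬ HasCopy K3UnionD3 (D3UnionPaths n) := by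
  rintro ⟨f, hf⟩
  have t1 := triangle_lt6 (hf 0 1 ((F_adj 0 1).mpr (by decide)))
    (hf 1 2 ((F_adj 1 2).mpr (by decide))) (hf 0 2 ((F_adj 0 2).mpr (by decide)))
  have t2 := triangle_lt6 (hf 3 4 ((F_adj 3 4).mpr (by decide)))
    (hf 4 5 ((F_adj 4 5).mpr (by decide))) (hf 3 5 ((F_adj 3 5).mpr (by decide)))
  have t3 := triangle_lt6 (hf 6 7 ((F_adj 6 7).mpr (by decide)))
    (hf 7 8 ((F_adj 7 8).mpr (by decide))) (hf 6 8 ((F_adj 6 8).mpr (by decide)))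
  have h6 : ∀ i : Fin 9, ((f i : Fin n) : ℕ) < 6 := by
    intro i
    fin_cases i <;> tauto
  have hinj : Function.Injective (fun i : Fin 9 => (⟨(f i : Fin n), h6 i⟩ : Fin 6)) := by
    intro a b hab
    have : ((f a : Fin n) : ℕ) = ((f b : Fin n) : ℕ) := by
      have := congrArg Fin.val hab
      simpa using this
    exact f.injective (Fin.ext this)
  have := Fintype.card_le_of_injective _ hinj
  simp [Fintype.card_fin] at this

def list1 (n : ℕ) : List (Fin n × Fin n) :=
  (List.range (n/3-2)).attach.map (fun i =>
    ((⟨6+3*i.1, by have := i.2; rw [List.mem_range] at this; omega⟩ : Fin n),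
     (⟨8+3*i.1, by have := i.2; rw [List.mem_range] at this; omega⟩ : Fin n)))

lemma mem_list1 {n : ℕ} {e : Fin n × Fin n} :
    e ∈ list1 n ↔ ∃ i, i < n/3-2 ∧ (e.1:ℕ) = 6+3*i ∧ (e.2:ℕ) = 8+3*i := by
  simp only [list1, List.mem_map, List.mem_attach, true_and]
  constructor
  · rintro ⟨⟨i, hi⟩, rfl⟩
    exact ⟨i, List.mem_range.mp hi, rfl, rfl⟩
  · rintro ⟨i, hi, h1, h2⟩
    refine ⟨⟨i, List.mem_range.mpr hi⟩, ?_⟩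
    ext <;> simp [h1.symm, h2.symm]

lemma nodup_list1 (n : ℕ) : (list1 n).Nodup := by
  refine List.Nodup.map ?_ (List.nodup_attach.mpr List.nodup_range)
  intro a b hab
  have : (6 : ℕ)+3*a.1 = 6+3*b.1 := congrArg (fun p => ((Prod.fst p : Fin n) : ℕ)) hab
  exact Subtype.ext (by omega)

noncomputable def list2 (n : ℕ) : List (Fin n × Fin n) :=
  ((Finset.univ : Finset (Fin n × Fin n)).filter (fun p =>
    (p.1:ℕ) < (p.2:ℕ) ∧ (p.1:ℕ)/3 ≠ (p.2:ℕ)/3 ∧ ¬((p.1:ℕ) = 2 ∧ (p.2:ℕ) = 3))).toList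

lemma mem_list2 {n : ℕ} {e : Fin n × Fin n} :
    e ∈ list2 n ↔
      (e.1:ℕ) < (e.2:ℕ) ∧ (e.1:ℕ)/3 ≠ (e.2:ℕ)/3 ∧ ¬((e.1:ℕ) = 2 ∧ (e.2:ℕ) = 3) := by
  simp [list2]

lemma nodup_list2 (n : ℕ) : (list2 n).Nodup := Finset.nodup_toList _

lemma split_facts {α : Type*} {l p s : List α} {e : α} (h : l = p ++ e :: s)
    (hnd : l.Nodup) : e ∈ l ∧ (∀ x ∈ p, x ∈ l) ∧ e ∉ p := by
  subst h
  refine ⟨by simp, fun x hx => by simp [hx], ?_⟩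
  rw [List.nodup_append] at hnd
  intro hep
  exact hnd.2.2 e hep e (by simp) rfl

lemma tri_sub {n : ℕ} (h3 : n % 3 = 0) (u v : Fin n) (hne : (u:ℕ) ≠ (v:ℕ))
    (hdiv : (u:ℕ)/3 = (v:ℕ)/3) : (addEdges (D3UnionPaths n) (list1 n)).Adj u v := by
  rw [addEdges_adj]
  have hun : (u:ℕ) < n := u.isLt
  have hvn : (v:ℕ) < n := v.isLt
  by_cases h6 : (u:ℕ) < 6
  · exact Or.inl ((base_adj u v).mpr ⟨hne, Or.inl ⟨hdiv, Or.inl h6⟩⟩)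
  · rcases (show (u:ℕ)+1 = (v:ℕ) ∨ (v:ℕ)+1 = (u:ℕ) ∨ (u:ℕ)+2 = (v:ℕ) ∨ (v:ℕ)+2 = (u:ℕ)
        from by omega) with h|h|h|h
    · exact Or.inl ((base_adj u v).mpr ⟨hne, Or.inl ⟨hdiv, Or.inr (Or.inl h)⟩⟩)
    · exact Or.inl ((base_adj u v).mpr ⟨hne, Or.inl ⟨hdiv, Or.inr (Or.inr h)⟩⟩)
    · refine Or.inr ⟨Fin.ne_of_val_ne hne, ?_⟩
      refine ⟨((⟨6+3*((u:ℕ)/3-2), by omega⟩ : Fin n), (⟨8+3*((u:ℕ)/3-2), by omega⟩ : Fin n)),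
        mem_list1.mpr ⟨(u:ℕ)/3-2, by omega, rfl, rfl⟩, ?_⟩
      rw [Sym2.eq_iff]
      exact Or.inl ⟨Fin.ext (by simp; omega), Fin.ext (by simp; omega)⟩
    · refine Or.inr ⟨Fin.ne_of_val_ne hne, ?_⟩
      refine ⟨((⟨6+3*((u:ℕ)/3-2), by omega⟩ : Fin n), (⟨8+3*((u:ℕ)/3-2), by omega⟩ : Fin n)),
        mem_list1.mpr ⟨(u:ℕ)/3-2, by omega, rfl, rfl⟩, ?_⟩
      rw [Sym2.eq_iff]
      exact Or.inr ⟨Fin.ext (by simp; omega), Fin.ext (by simp; omega)⟩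

lemma addEdges_append {V : Type*} (H : SimpleGraph V) (l1 l2 : List (V × V)) :
    addEdges H (l1 ++ l2) = addEdges (addEdges H l1) l2 := by
  ext x y
  simp only [addEdges_adj, List.mem_append]
  aesop

lemma proc1 {n : ℕ} (hn : 15 ≤ n) :
    SatProcess K3UnionD3 (D3UnionPaths n) (list1 n) := by
  apply satProcess_of_steps
  intro p e s hsplit
  obtain ⟨he, hp, hep⟩ := split_facts hsplit (nodup_list1 n)
  obtain ⟨i, hi, h1, h2⟩ := mem_list1.mp he
  have hG : ¬ (addEdges (D3UnionPaths n) p).Adj e.1 e.2 := by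
    rw [addEdges_adj]
    rintro (h | ⟨-, q, hq, hsym⟩)
    · rw [base_adj] at h; omega
    · obtain ⟨j, hj, hq1, hq2⟩ := mem_list1.mp (hp q hq)
      rw [Sym2.eq_iff] at hsym
      rcases hsym with ⟨ha, hb⟩|⟨ha, hb⟩
      · exact hep ((Prod.ext ha hb) ▸ hq)
      · have ha' := congrArg Fin.val ha
        have hb' := congrArg Fin.val hb
        omega
  exact step1 hn _ i hi e.1 e.2 h1 h2 hG (le_addEdges _ _)

lemma proc2 {n : ℕ} (hn : 15 ≤ n) (h3 : n % 3 = 0) :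
    SatProcess K3UnionD3 (addEdges (D3UnionPaths n) (list1 n)) (list2 n) := by
  apply satProcess_of_steps
  intro p e s hsplit
  obtain ⟨he, hp, hep⟩ := split_facts hsplit (nodup_list2 n)
  obtain ⟨hlt, hdiv, h23⟩ := mem_list2.mp he
  have hG : ¬ (addEdges (addEdges (D3UnionPaths n) (list1 n)) p).Adj e.1 e.2 := by
    rw [addEdges_adj, addEdges_adj]
    rintro ((h | ⟨-, q, hq, hsym⟩) | ⟨-, q, hq, hsym⟩)
    · rw [base_adj] at h; omega
    · obtain ⟨j, hj, hq1, hq2⟩ := mem_list1.mp hq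
      rw [Sym2.eq_iff] at hsym
      rcases hsym with ⟨ha, hb⟩|⟨ha, hb⟩ <;>
        · have ha' := congrArg Fin.val ha
          have hb' := congrArg Fin.val hb
          omega
    · obtain ⟨hlt', hdiv', h23'⟩ := mem_list2.mp (hp q hq)
      rw [Sym2.eq_iff] at hsym
      rcases hsym with ⟨ha, hb⟩|⟨ha, hb⟩
      · exact hep ((Prod.ext ha hb) ▸ hq)
      · have ha' := congrArg Fin.val ha
        have hb' := congrArg Fin.val hb
        omega
  refine step2 hn h3 _ e.1 e.2 hG ?_ hdiv
  intro u v h1 h2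
  exact le_addEdges _ p (tri_sub h3 u v h1 h2)

lemma final_eq {n : ℕ} (hn : 15 ≤ n) (h3 : n % 3 = 0) :
    addEdges (D3UnionPaths n) (list1 n ++ list2 n) = (⊤ : SimpleGraph (Fin n)) := by
  rw [addEdges_append]
  ext x y
  simp only [SimpleGraph.top_adj]
  constructor
  · intro h; exact h.ne
  · intro hxy
    have hne : (x:ℕ) ≠ (y:ℕ) := fun hh => hxy (Fin.ext hh)
    rw [addEdges_adj]
    by_cases hdiv : (x:ℕ)/3 = (y:ℕ)/3
    · exact Or.inl (tri_sub h3 x y hne hdiv)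
    · by_cases h23 : ((x:ℕ)=2 ∧ (y:ℕ)=3) ∨ ((x:ℕ)=3 ∧ (y:ℕ)=2)
      · exact Or.inl (le_addEdges _ _ ((base_adj x y).mpr ⟨hne, Or.inr (by tauto)⟩))
      · refine Or.inr ⟨hxy, ?_⟩
        rcases Nat.lt_or_ge (x:ℕ) (y:ℕ) with h|h
        · exact ⟨(x,y), mem_list2.mpr ⟨h, hdiv, by tauto⟩, rfl⟩
        · refine ⟨(y,x), mem_list2.mpr ⟨show (y:ℕ) < (x:ℕ) by omega,
            show (y:ℕ)/3 ≠ (x:ℕ)/3 by omega, show ¬((y:ℕ) = 2 ∧ (x:ℕ) = 3) by tauto⟩, ?_⟩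
          rw [Sym2.eq_iff]
          exact Or.inr ⟨rfl, rfl⟩

lemma main_ws {n : ℕ} (hn : 15 ≤ n) (h3 : n % 3 = 0) :
    WeaklySaturated (⊤ : SimpleGraph (Fin n)) K3UnionD3 (D3UnionPaths n) :=
  ⟨le_top, noCopy hn, list1 n ++ list2 n,
    satProcess_append _ _ _ _ (proc1 hn) (proc2 hn h3), final_eq hn h3⟩

lemma count {n : ℕ} (hn : 15 ≤ n) (h3 : n % 3 = 0) :
    (D3UnionPaths n).edgeSet.ncard ≤ 2 * n / 3 + 3 := by
  have hn0 : 0 < n := by omega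
  set q : ℕ → ℕ → Sym2 (Fin n) := fun a b =>
    s((⟨a % n, Nat.mod_lt _ hn0⟩ : Fin n), (⟨b % n, Nat.mod_lt _ hn0⟩ : Fin n)) with hqdef
  set L : List (Sym2 (Fin n)) :=
    ([q 0 1, q 0 2, q 1 2, q 3 4, q 3 5, q 4 5, q 2 3] ++
     (List.range (n/3-2)).map (fun i => q (6+3*i) (7+3*i))) ++
    (List.range (n/3-2)).map (fun i => q (7+3*i) (8+3*i)) with hLdef
  have hswap : ∀ a b, q a b = q b a := fun a b => Sym2.eq_swap
  have hq : ∀ x y : Fin n, s(x, y) = q (x:ℕ) (y:ℕ) := by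
    intro x y
    rw [hqdef]
    exact congrArg (fun p : Fin n × Fin n => s(p.1, p.2)) (Prod.ext (Fin.ext (Nat.mod_eq_of_lt x.isLt).symm : x = ⟨(x:ℕ) % n, Nat.mod_lt _ hn0⟩)
      (Fin.ext (Nat.mod_eq_of_lt y.isLt).symm : y = ⟨(y:ℕ) % n, Nat.mod_lt _ hn0⟩) :
      (x, y) = ((⟨(x:ℕ) % n, Nat.mod_lt _ hn0⟩ : Fin n), (⟨(y:ℕ) % n, Nat.mod_lt _ hn0⟩ : Fin n)))
  -- membership helper for ordered pairs
  have hmem : ∀ a b : ℕ, b < n → (a/3 = b/3 ∧ a+1 = b) ∨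
      ((a,b) ∈ [(0,1),(0,2),(1,2),(3,4),(3,5),(4,5),(2,3)]) → q a b ∈ L.toFinset := by
    intro a b hbn hab
    rw [List.mem_toFinset, hLdef]
    rcases hab with ⟨hdiv, hsucc⟩ | hmem7
    · by_cases h6 : a < 6
      · -- a,b < 6 with consecutive in same triple
        have : (a = 0 ∧ b = 1) ∨ (a = 1 ∧ b = 2) ∨ (a = 3 ∧ b = 4) ∨ (a = 4 ∧ b = 5) := by omega
        rcases this with ⟨h1,h2⟩|⟨h1,h2⟩|⟨h1,h2⟩|⟨h1,h2⟩ <;> rw [h1, h2] <;> simp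
      · rcases (show a % 3 = 0 ∨ a % 3 = 1 from by omega) with hr | hr
        · have h1 : a = 6+3*(a/3-2) := by omega
          have h2 : b = 7+3*(a/3-2) := by omega
          rw [h1, h2]
          apply List.mem_append_left
          apply List.mem_append_right
          exact List.mem_map.mpr ⟨a/3-2, List.mem_range.mpr (by omega), rfl⟩
        · have h1 : a = 7+3*(a/3-2) := by omega
          have h2 : b = 8+3*(a/3-2) := by omega
          rw [h1, h2]
          apply List.mem_append_right
          exact List.mem_map.mpr ⟨a/3-2, List.mem_range.mpr (by omega), rfl⟩
    · simp only [List.mem_cons, List.not_mem_nil, or_false, Prod.mk.injEq] at hmem7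
      rcases hmem7 with ⟨h1,h2⟩|⟨h1,h2⟩|⟨h1,h2⟩|⟨h1,h2⟩|⟨h1,h2⟩|⟨h1,h2⟩|⟨h1,h2⟩ <;>
        rw [h1, h2] <;> simp
  have hsub : (D3UnionPaths n).edgeSet ⊆ ↑L.toFinset := by
    intro e he
    induction e with
    | _ x y =>
      rw [SimpleGraph.mem_edgeSet, base_adj] at he
      rw [Finset.mem_coe, hq x y]
      have hxn : (x:ℕ) < n := x.isLt
      have hyn : (y:ℕ) < n := y.isLt
      obtain ⟨hne, hc⟩ := he
      rcases hc with ⟨hdiv, h6 | hsucc | hsucc⟩ | ⟨h1,h2⟩ | ⟨h1,h2⟩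
      · -- both < 6, same triple
        have hy6 : (y:ℕ) < 6 := by omega
        rcases (show (x:ℕ) < (y:ℕ) ∨ (y:ℕ) < (x:ℕ) from by omega) with hor | hor
        · refine hmem _ _ hyn (Or.inr ?_)
          simp only [List.mem_cons, List.not_mem_nil, or_false, Prod.mk.injEq]
          omega
        · rw [hswap]
          refine hmem _ _ hxn (Or.inr ?_)
          simp only [List.mem_cons, List.not_mem_nil, or_false, Prod.mk.injEq]
          omega
      · exact hmem _ _ hyn (Or.inl ⟨hdiv, hsucc⟩)
      · rw [hswap]
        exact hmem _ _ hxn (Or.inl ⟨hdiv.symm, hsucc⟩)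
      · exact hmem _ _ hyn (Or.inr (by simp [h1, h2]))
      · rw [hswap]
        exact hmem _ _ hxn (Or.inr (by simp [h1, h2]))
  calc (D3UnionPaths n).edgeSet.ncard ≤ (↑L.toFinset : Set (Sym2 (Fin n))).ncard :=
        Set.ncard_le_ncard hsub L.toFinset.finite_toSet
    _ = L.toFinset.card := Set.ncard_coe_finset _
    _ ≤ L.length := L.toFinset_card_le
    _ ≤ 2 * n / 3 + 3 := by
        rw [hLdef]
        simp only [List.length_append, List.length_map, List.length_range, List.length_cons, List.length_nil]
        omega


/-- for `n ≥ 15` with `3 ∣ n`, the graph `D_3 ∪ ((n-6)/3)·P_3` is weakly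
`(K_n, K_3 ∪ D_3)`-saturated, whence `wsat(K_n, K_3 ∪ D_3) ≤ 2n/3 + 3`. -/
theorem stmt6 {n : ℕ} (hn : 15 ≤ n) (h3 : n % 3 = 0) :
    WeaklySaturated (⊤ : SimpleGraph (Fin n)) K3UnionD3 (D3UnionPaths n) ∧
    wsat (⊤ : SimpleGraph (Fin n)) K3UnionD3 ≤ 2 * n / 3 + 3 := by
  refine ⟨main_ws hn h3, ?_⟩
  rw [wsat]
  exact le_trans (Nat.sInf_le ⟨_, main_ws hn h3, rfl⟩) (count hn h3)
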